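/- Let R(s) = P(s)/Q(s) be a rational function with deg P ≤ deg Q, with Q nonvanishing on [0,∞), R(0) = 1, and R(s) > 0 for s ≥ 0. Then there exists a constant C > 0, independent of J and z, such that for all z ≥ 0 and all integers J ≥ 10, |R((J-1)z)/R(Jz) - 1| ≤ C/J. -/

import Mathlib

open Polynomial Filter Set Real

/-- degree of `X * derivative p` is at most degree of `p`. -/
lemma degree_X_mul_derivative_le (p : Polynomial ℝ) (hp : p ≠ 0) :
    (Polynomial.X * Polynomial.derivative p).degree ≤ p.degree := by
  rcases eq_or_ne (Polynomial.derivative p) 0 with h | h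
  · simp [h]
  · rw [degree_mul, degree_X]
    have hlt := degree_derivative_lt hp
    rw [degree_eq_natDegree h, degree_eq_natDegree hp] at hlt ⊢
    have hlt' : p.derivative.natDegree < p.natDegree := by exact_mod_cast hlt
    exact_mod_cast Nat.one_add_le_iff.mpr hlt'

/-- A rational function with numerator degree ≤ denominator degree and positive
denominator on `[0, ∞)` is bounded there. -/
lemma poly_ratio_bound (N D : Polynomial ℝ) (hdeg : N.degree ≤ D.degree)
    (hD : ∀ s : ℝ, 0 ≤ s → 0 < D.eval s) :
    ∃ M : ℝ, 0 < M ∧ ∀ s : ℝ, 0 ≤ s → |N.eval s| ≤ M * D.eval s := by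
  have htends : ∃ c : ℝ, Tendsto (fun s => N.eval s / D.eval s) atTop (nhds c) := by
    rcases hdeg.lt_or_eq with h | h
    · exact ⟨0, N.div_tendsto_zero_of_degree_lt D h⟩
    · exact ⟨_, N.div_tendsto_leadingCoeff_div_of_degree_eq D h⟩
  obtain ⟨c, hc⟩ := htends
  have hev : ∀ᶠ s in atTop, |N.eval s / D.eval s - c| ≤ 1 := by
    have := hc.eventually (Metric.closedBall_mem_nhds c one_pos)
    filter_upwards [this] with s hs
    simpa [Real.dist_eq] using hs
  obtain ⟨s₀, hs₀⟩ := eventually_atTop.1 hev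
  set t := max s₀ 0 with ht
  have hcont : ContinuousOn (fun s => N.eval s / D.eval s) (Icc 0 t) := by
    apply ContinuousOn.div
    · exact (Polynomial.continuous N).continuousOn
    · exact (Polynomial.continuous D).continuousOn
    · intro x hx
      exact (hD x hx.1).ne'
  obtain ⟨B, hB⟩ := isCompact_Icc.exists_bound_of_continuousOn hcont
  refine ⟨max B (|c| + 1) + 1, by positivity, fun s hs => ?_⟩
  have hDs := hD s hs
  have hratio : |N.eval s / D.eval s| ≤ max B (|c| + 1) + 1 := by
    rcases le_or_gt s t with h | h
    · have := hB s ⟨hs, h⟩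
      have h2 : B ≤ max B (|c| + 1) := le_max_left _ _
      calc |N.eval s / D.eval s| = ‖N.eval s / D.eval s‖ := rfl
        _ ≤ B := this
        _ ≤ max B (|c| + 1) + 1 := by linarith
    · have hst : s₀ ≤ s := le_trans (le_max_left _ _) h.le
      have h1 := hs₀ s hst
      have h2 : |N.eval s / D.eval s| ≤ |c| + 1 := by
        calc |N.eval s / D.eval s| ≤ |N.eval s / D.eval s - c| + |c| := by
              simpa using abs_add_le (N.eval s / D.eval s - c) c
          _ ≤ |c| + 1 := by linarith
      have h3 : |c| + 1 ≤ max B (|c| + 1) := le_max_right _ _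
      linarith
  have : |N.eval s| = |N.eval s / D.eval s| * D.eval s := by
    rw [abs_div, abs_of_pos hDs, div_mul_cancel₀]
    exact hDs.ne'
  rw [this]
  exact mul_le_mul_of_nonneg_right hratio hDs.le

lemma abs_exp_sub_one_le'' (x : ℝ) : |Real.exp x - 1| ≤ |x| * Real.exp |x| := by
  rcases le_or_gt 0 x with h | h
  · rw [abs_of_nonneg h, abs_of_nonneg (by linarith [Real.one_le_exp h] : (0:ℝ) ≤ Real.exp x - 1)]
    have h1 : -x + 1 ≤ Real.exp (-x) := Real.add_one_le_exp (-x)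
    have h2 : Real.exp (-x) = (Real.exp x)⁻¹ := Real.exp_neg x
    have h3 : (0:ℝ) < Real.exp x := Real.exp_pos x
    have h4 : (-x + 1) * Real.exp x ≤ 1 := by
      calc (-x + 1) * Real.exp x ≤ (Real.exp x)⁻¹ * Real.exp x := by
            apply mul_le_mul_of_nonneg_right _ h3.le
            rw [← h2]; exact h1
        _ = 1 := inv_mul_cancel₀ h3.ne'
    nlinarith
  · rw [abs_of_neg h, abs_of_nonpos (by linarith [Real.exp_lt_one_iff.mpr h] : Real.exp x - 1 ≤ 0)]
    have h1 : x + 1 ≤ Real.exp x := Real.add_one_le_exp x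
    have h2 : (1:ℝ) ≤ Real.exp (-x) := Real.one_le_exp (by linarith)
    nlinarith

theorem rational_stability_ratio_bound (P Q : Polynomial ℝ)
    (hdeg : P.degree ≤ Q.degree)
    (hQ : ∀ s : ℝ, 0 ≤ s → Q.eval s ≠ 0)
    (R : ℝ → ℝ) (hR : ∀ s : ℝ, R s = P.eval s / Q.eval s)
    (hR0 : R 0 = 1) (hRpos : ∀ s : ℝ, 0 ≤ s → 0 < R s) :
    ∃ C : ℝ, 0 < C ∧ ∀ z : ℝ, 0 ≤ z → ∀ J : ℕ, 10 ≤ J →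
      |R (((J : ℝ) - 1) * z) / R ((J : ℝ) * z) - 1| ≤ C / J := by
  have hRfun : R = fun s => P.eval s / Q.eval s := funext hR
  subst hRfun
  -- basic positivity facts
  have hPQpos : ∀ s : ℝ, 0 ≤ s → 0 < (P * Q).eval s := by
    intro s hs
    have h := hRpos s hs
    rw [eval_mul]
    rcases div_pos_iff.1 h with ⟨h1, h2⟩ | ⟨h1, h2⟩
    · exact mul_pos h1 h2
    · exact mul_pos_of_neg_of_neg h1 h2
  have hP : ∀ s : ℝ, 0 ≤ s → P.eval s ≠ 0 := by
    intro s hs hc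
    have := hPQpos s hs
    rw [eval_mul, hc, zero_mul] at this
    exact lt_irrefl 0 this
  have hPne : P ≠ 0 := fun h => hP 0 le_rfl (by simp [h])
  have hQne : Q ≠ 0 := fun h => hQ 0 le_rfl (by simp [h])
  -- the polynomial bound
  set N₀ : Polynomial ℝ := Polynomial.derivative P * Q - P * Polynomial.derivative Q with hN₀
  have hdegN : (Polynomial.X * N₀).degree ≤ (P * Q).degree := by
    have h1 : (Polynomial.X * (Polynomial.derivative P * Q)).degree ≤ (P * Q).degree := by
      have e : Polynomial.X * (Polynomial.derivative P * Q)
          = (Polynomial.X * Polynomial.derivative P) * Q := by ring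
      calc (Polynomial.X * (Polynomial.derivative P * Q)).degree
          = (Polynomial.X * Polynomial.derivative P).degree + Q.degree := by rw [e, degree_mul]
        _ ≤ P.degree + Q.degree := add_le_add_left (degree_X_mul_derivative_le P hPne) _
        _ = (P * Q).degree := (degree_mul).symm
    have h2 : (Polynomial.X * (P * Polynomial.derivative Q)).degree ≤ (P * Q).degree := by
      have e : Polynomial.X * (P * Polynomial.derivative Q)
          = P * (Polynomial.X * Polynomial.derivative Q) := by ring
      calc (Polynomial.X * (P * Polynomial.derivative Q)).degree
          = P.degree + (Polynomial.X * Polynomial.derivative Q).degree := by rw [e, degree_mul]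
        _ ≤ P.degree + Q.degree := add_le_add_right (degree_X_mul_derivative_le Q hQne) _
        _ = (P * Q).degree := (degree_mul).symm
    calc (Polynomial.X * N₀).degree
        = (Polynomial.X * (Polynomial.derivative P * Q)
            - Polynomial.X * (P * Polynomial.derivative Q)).degree := by rw [hN₀]; ring_nf
      _ ≤ max _ _ := degree_sub_le _ _
      _ ≤ (P * Q).degree := max_le h1 h2
  obtain ⟨M, hMpos, hM⟩ := poly_ratio_bound (Polynomial.X * N₀) (P * Q) hdegN hPQpos
  -- derivative of log ∘ R
  have hL : ∀ s : ℝ, 0 ≤ s →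
      HasDerivAt (fun u => Real.log (P.eval u / Q.eval u))
        (N₀.eval s / (P * Q).eval s) s := by
    intro s hs
    have hQs := hQ s hs
    have hPs := hP s hs
    have hd : HasDerivAt (fun u => P.eval u / Q.eval u)
        (((Polynomial.derivative P).eval s * Q.eval s
          - P.eval s * (Polynomial.derivative Q).eval s) / (Q.eval s) ^ 2) s :=
      (P.hasDerivAt s).div (Q.hasDerivAt s) hQs
    have hne : P.eval s / Q.eval s ≠ 0 := (hRpos s hs).ne'
    have := (Real.hasDerivAt_log hne).comp s hd
    refine this.congr_deriv ?_
    rw [hN₀]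
    field_simp
    simp only [eval_mul, eval_add, eval_neg, eval_sub]
    ring
  -- main estimate
  refine ⟨10 / 9 * M * Real.exp (M / 9), by positivity, fun z hz J hJ => ?_⟩
  have hJR : (10 : ℝ) ≤ (J : ℝ) := by exact_mod_cast hJ
  have hJpos : (0 : ℝ) < (J : ℝ) := by linarith
  rcases eq_or_lt_of_le hz with hz0 | hz0
  · rw [← hz0]
    simp only [mul_zero]
    rw [div_self (hRpos 0 le_rfl).ne', sub_self, abs_zero]
    positivity
  · -- z > 0
    set a := ((J : ℝ) - 1) * z with ha
    set b := (J : ℝ) * z with hb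
    have hapos : 0 < a := by
      apply mul_pos _ hz0; linarith
    have hab : a < b := by
      rw [ha, hb]
      exact mul_lt_mul_of_pos_right (by linarith) hz0
    have hcont : ContinuousOn (fun u => Real.log (P.eval u / Q.eval u)) (Icc a b) := by
      intro x hx
      exact ((hL x (hapos.le.trans hx.1)).continuousAt).continuousWithinAt
    obtain ⟨c, hcmem, hcslope⟩ := exists_hasDerivAt_eq_slope
      (fun u => Real.log (P.eval u / Q.eval u))
      (fun u => N₀.eval u / (P * Q).eval u) hab hcont
      (fun x hx => hL x (le_of_lt (lt_of_lt_of_le hapos hx.1.le)))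
    have hcpos : 0 < c := lt_trans hapos hcmem.1
    have hba : b - a = z := by rw [ha, hb]; ring
    -- bound on the log difference
    set d := Real.log (P.eval a / Q.eval a) - Real.log (P.eval b / Q.eval b) with hd
    have hdbound : |d| ≤ M / ((J : ℝ) - 1) := by
      have hMc := hM c hcpos.le
      rw [eval_mul, eval_X] at hMc
      have hDc := hPQpos c hcpos.le
      have h1 : |N₀.eval c / (P * Q).eval c| ≤ M / c := by
        rw [abs_div, abs_of_pos hDc, div_le_div_iff₀ hDc hcpos]
        calc |N₀.eval c| * c = |c * N₀.eval c| := by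
              rw [abs_mul, abs_of_pos hcpos]; ring
          _ ≤ M * (P * Q).eval c := hMc
      have h2 : d = -(z * (N₀.eval c / (P * Q).eval c)) := by
        rw [hd]
        have := hcslope
        rw [eq_div_iff (by rw [hba]; exact hz0.ne')] at this
        rw [hba] at this
        linarith [this]
      rw [h2, abs_neg, abs_mul, abs_of_pos hz0]
      calc z * |N₀.eval c / (P * Q).eval c| ≤ z * (M / c) := by
            exact mul_le_mul_of_nonneg_left h1 hz0.le
        _ ≤ M / ((J : ℝ) - 1) := by
            rw [mul_div_assoc', div_le_div_iff₀ hcpos (by linarith : (0:ℝ) < (J : ℝ) - 1)]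
            have hca : a ≤ c := hcmem.1.le
            rw [ha] at hca
            nlinarith
    have hJ1 : (9 : ℝ) ≤ (J : ℝ) - 1 := by linarith
    have hd9 : |d| ≤ M / 9 := le_trans hdbound (by
      apply div_le_div_of_nonneg_left hMpos.le (by norm_num) hJ1)
    -- ratio as exponential
    have hRa := hRpos a hapos.le
    have hRb := hRpos b (lt_trans hapos hab).le
    have hratio : P.eval a / Q.eval a / (P.eval b / Q.eval b) = Real.exp d := by
      rw [hd, ← Real.log_div hRa.ne' hRb.ne', Real.exp_log (div_pos hRa hRb)]
    rw [hratio]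
    calc |Real.exp d - 1| ≤ |d| * Real.exp |d| := abs_exp_sub_one_le'' d
      _ ≤ (M / ((J : ℝ) - 1)) * Real.exp (M / 9) := by
          apply mul_le_mul hdbound (Real.exp_le_exp.2 hd9) (Real.exp_pos _).le
          positivity
      _ ≤ 10 / 9 * M * Real.exp (M / 9) / (J : ℝ) := by
          rw [div_mul_eq_mul_div, div_le_div_iff₀ (by linarith : (0:ℝ) < (J : ℝ) - 1) hJpos]
          nlinarith [mul_nonneg (mul_pos hMpos (Real.exp_pos (M / 9))).le
            (by linarith : (0:ℝ) ≤ (J : ℝ) - 10)]
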